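/- Let λ ∈ ℝ with λ > 2, and let q > 0, v ∈ ℝ. Then (1+cos²v)·q − 2cos v·√(q² + λq + 1) + λ > 0. In particular, the Riemann minimal example with parameter λ > 2 foliated by circles in parallel spacelike planes is spacelike at every point. -/
import Mathlib

/-- For λ > 2 the spacelike condition holds everywhere:
(1+cos²v)q − 2cos v·√(q²+λq+1) + λ > 0 for all q > 0 and v ∈ ℝ. -/
theorem spacelike_for_lambda_gt_two (lam q v : ℝ) (hlam : 2 < lam) (hq : 0 < q) :
    (1 + (Real.cos v)^2) * q - 2 * Real.cos v * Real.sqrt (q^2 + lam*q + 1) + lam > 0 := by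
  set c := Real.cos v with hc
  set s := Real.sqrt (q^2 + lam*q + 1) with hs
  have hsnn : 0 ≤ s := Real.sqrt_nonneg _
  have hsq : s^2 = q^2 + lam*q + 1 := by
    rw [hs, Real.sq_sqrt]; nlinarith
  have hc2 : c^2 ≤ 1 := by
    have := Real.neg_one_le_cos v
    have := Real.cos_le_one v
    nlinarith
  rcases le_or_gt c 0 with h | h
  · nlinarith
  · have key : ((1 + c^2) * q + lam)^2 > (2*c*s)^2 := by
      have : (2*c*s)^2 = 4*c^2*(q^2 + lam*q + 1) := by ring_nf; nlinarith [hsq]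
      rw [this]
      nlinarith [sq_nonneg ((1-c^2)*q),
        mul_nonneg (mul_nonneg (by linarith : (0:ℝ) ≤ lam) (by linarith : (0:ℝ) ≤ 1 - c^2)) hq.le]
    by_contra hcon
    push_neg at hcon
    have hA : 0 < (1 + c^2) * q + lam := by nlinarith
    have hAB : (1 + c^2) * q + lam ≤ 2*c*s := by linarith
    nlinarith [mul_self_le_mul_self hA.le hAB]
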